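/- For a vector v indexed by Fin d × (Fin d × Fin d), one has A *ᵥ v = 0 if and only if there exists μ : Fin d → ℂ with Σ_i μ i = 0 such that v (i,(p,q)) = μ i · φ(p,q) for all i, p, q, where φ(p,q) = 1/√d if p = q and 0 otherwise. (Equivalently, the null space of A is spanned by the vectors μ ⊗ φ with μ orthogonal to the uniform vector ν = (1/√d)·Σ_i e_i.) -/

import Mathlib

open Matrix Kronecker ComplexOrder

/-- Projector onto the maximally entangled state: Φ[(i,j),(k,l)] = 1/d if i=j and k=l. -/
noncomputable def Phi (d : ℕ) : Matrix (Fin d × Fin d) (Fin d × Fin d) ℂ :=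
  fun p q => if p.1 = p.2 ∧ q.1 = q.2 then ((d : ℂ))⁻¹ else 0

/-- Coefficients a i k: 1 on the diagonal, -1/(d²-1) off the diagonal. -/
noncomputable def aCoef (d : ℕ) (i k : Fin d) : ℝ :=
  if i = k then 1 else -1 / ((d : ℝ) ^ 2 - 1)

/-- The matrix A = Σ_{i,k} E_{ik} ⊗ₖ (a i k • (I − Φ) + Φ). -/
noncomputable def Amat (d : ℕ) : Matrix (Fin d × (Fin d × Fin d)) (Fin d × (Fin d × Fin d)) ℂ :=
  ∑ i : Fin d, ∑ k : Fin d,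
    (Matrix.single i k (1 : ℂ)) ⊗ₖ
      (aCoef d i k • ((1 : Matrix (Fin d × Fin d) (Fin d × Fin d) ℂ) - Phi d) + Phi d)

/-- The null space of A consists exactly of the vectors μ ⊗ φ with Σ_i μ i = 0,
where φ is the maximally entangled unit vector. -/

lemma amat_entry (d : ℕ) (i k p q r s : Fin d) :
    Amat d (i,(p,q)) (k,(r,s)) =
      (aCoef d i k : ℂ) * ((if p = r ∧ q = s then 1 else 0) - Phi d (p,q) (r,s)) + Phi d (p,q) (r,s) := by
  unfold Amat
  simp [Matrix.sum_apply, Matrix.kroneckerMap_apply, Matrix.single, Matrix.one_apply,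
    Prod.ext_iff, Matrix.smul_apply, Matrix.sub_apply, Matrix.add_apply, Finset.sum_ite_eq]
  rw [Finset.sum_eq_single i, Finset.sum_eq_single k] <;> simp +contextual [eq_comm]

lemma amat_mulVec (d : ℕ) (v : Fin d × (Fin d × Fin d) → ℂ) (i p q : Fin d) :
    (Amat d *ᵥ v) (i,(p,q)) =
      ∑ k, (aCoef d i k : ℂ) * v (k,(p,q)) +
        (if p = q then (d:ℂ)⁻¹ * ∑ k, ((1:ℂ) - aCoef d i k) * (∑ r, v (k,(r,r))) else 0) := by
  rw [Matrix.mulVec, dotProduct]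
  rw [Fintype.sum_prod_type]
  have hk : ∀ k : Fin d, ∑ rs : Fin d × Fin d, Amat d (i,(p,q)) (k, rs) * v (k, rs)
      = (aCoef d i k : ℂ) * v (k,(p,q)) +
        (if p = q then (d:ℂ)⁻¹ * (((1:ℂ) - aCoef d i k) * (∑ r, v (k,(r,r)))) else 0) := by
    intro k
    rw [Fintype.sum_prod_type]
    simp only [amat_entry, Phi]
    by_cases hpq : p = q
    · subst hpq
      simp only [eq_self_iff_true, true_and, if_true]
      have step : ∀ x y : Fin d,
          ((aCoef d i k : ℂ) * ((if p = x ∧ p = y then (1:ℂ) else 0) -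
              if x = y then ((d:ℂ))⁻¹ else 0) + (if x = y then ((d:ℂ))⁻¹ else 0)) * v (k, x, y)
          = (if p = y then (if p = x then (aCoef d i k : ℂ) * v (k, x, y) else 0) else 0)
            + (if x = y then ((1:ℂ) - (aCoef d i k : ℂ)) * ((d:ℂ))⁻¹ * v (k, x, y) else 0) := by
        intro x y
        split_ifs <;> first | ring1 | tauto
      rw [Finset.sum_congr rfl fun x _ => Finset.sum_congr rfl fun y _ => step x y]
      simp only [Finset.sum_add_distrib, Finset.sum_ite_eq, Finset.sum_ite_eq',
        Finset.mem_univ, if_true]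
      simp only [Finset.mul_sum]
      exact congrArg₂ (· + ·) rfl (Finset.sum_congr rfl fun _ _ => by ring)
    · simp only [hpq, false_and, if_false, ite_and]
      simp [hpq, sub_mul, add_mul, Finset.sum_sub_distrib, Finset.sum_add_distrib,
        Finset.sum_ite_eq, Finset.sum_ite_eq', ite_mul, mul_ite]
  rw [Finset.sum_congr rfl (fun k _ => hk k), Finset.sum_add_distrib]
  congr 1
  by_cases hpq : p = q <;> simp [hpq, Finset.mul_sum]

theorem stmt_5 (d : ℕ) (hd : 2 ≤ d) (v : Fin d × (Fin d × Fin d) → ℂ) :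
    Amat d *ᵥ v = 0 ↔
      ∃ μ : Fin d → ℂ, (∑ i : Fin d, μ i) = 0 ∧
        ∀ i p q : Fin d,
          v (i, (p, q)) = μ i * (if p = q then ((Real.sqrt d : ℂ))⁻¹ else 0) := by
  have hdR : (2:ℝ) ≤ (d:ℝ) := by exact_mod_cast hd
  have hd0 : (d:ℂ) ≠ 0 := Nat.cast_ne_zero.mpr (by omega)
  have hc : (d:ℂ) * (d:ℂ)⁻¹ = 1 := mul_inv_cancel₀ hd0
  set b : ℂ := ((-1 / ((d:ℝ)^2 - 1) : ℝ) : ℂ) with hb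
  have hcoef : ∀ i k : Fin d, (aCoef d i k : ℂ) = if i = k then 1 else b := by
    intro i k; unfold aCoef; split_ifs <;> simp [hb]
  have hposden : (0:ℝ) < (d:ℝ)^2 - 1 := by nlinarith
  have h1b : (1:ℂ) - b ≠ 0 := by
    rw [hb, show (1:ℂ) - ((-1 / ((d:ℝ)^2 - 1) : ℝ) : ℂ)
        = (((1 - (-1 / ((d:ℝ)^2 - 1))) : ℝ) : ℂ) by push_cast; ring]
    refine Complex.ofReal_ne_zero.mpr (ne_of_gt ?_)
    have h : (0:ℝ) < 1 / ((d:ℝ)^2 - 1) := by positivity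
    have h2 : -1 / ((d:ℝ)^2 - 1) = -(1 / ((d:ℝ)^2 - 1)) := by ring
    rw [h2]; linarith
  have hkey2 : (1:ℂ) + ((d:ℂ) - 1) * b ≠ 0 := by
    rw [hb, show (1:ℂ) + ((d:ℂ) - 1) * ((-1 / ((d:ℝ)^2 - 1) : ℝ) : ℂ)
        = (((1 + ((d:ℝ)-1) * (-1 / ((d:ℝ)^2 - 1))) : ℝ) : ℂ) by push_cast; ring_nf]
    refine Complex.ofReal_ne_zero.mpr (ne_of_gt ?_)
    have hx : (1 / ((d:ℝ)^2 - 1)) * ((d:ℝ)^2 - 1) = 1 := by field_simp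
    have hxpos : (0:ℝ) < 1 / ((d:ℝ)^2 - 1) := by positivity
    have hprod : (0:ℝ) < (1 / ((d:ℝ)^2 - 1)) * ((d:ℝ)^2 - (d:ℝ)) :=
      mul_pos hxpos (by nlinarith)
    have h2 : ((d:ℝ)-1) * (-1 / ((d:ℝ)^2 - 1)) = -( ((d:ℝ)-1) * (1 / ((d:ℝ)^2 - 1))) := by ring
    nlinarith [hx, hprod]
  have hdpos : (0:ℝ) < Real.sqrt d := Real.sqrt_pos.mpr (by positivity)
  have hsq0 : ((Real.sqrt d : ℝ) : ℂ) ≠ 0 := Complex.ofReal_ne_zero.mpr (ne_of_gt hdpos)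
  have hsqrt : ((Real.sqrt d : ℝ) : ℂ) * ((Real.sqrt d : ℝ) : ℂ) = (d:ℂ) := by
    rw [← Complex.ofReal_mul, Real.mul_self_sqrt (by positivity)]
    norm_cast
  have hinv2 : ((Real.sqrt d : ℝ) : ℂ)⁻¹ * ((Real.sqrt d : ℝ) : ℂ)⁻¹ = (d:ℂ)⁻¹ := by
    rw [← mul_inv, hsqrt]
  set W : Fin d → ℂ := fun k => ∑ r, v (k,(r,r)) with hW
  have sumA : ∀ i p q : Fin d, ∑ k, (aCoef d i k : ℂ) * v (k,(p,q))
      = (1 - b) * v (i,(p,q)) + b * ∑ k, v (k,(p,q)) := by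
    intro i p q
    have h : ∀ k : Fin d, (aCoef d i k : ℂ) * v (k,(p,q))
        = b * v (k,(p,q)) + (if i = k then (1 - b) * v (k,(p,q)) else 0) := by
      intro k; rw [hcoef]; split_ifs <;> ring
    rw [Finset.sum_congr rfl fun k _ => h k, Finset.sum_add_distrib, Finset.sum_ite_eq,
      ← Finset.mul_sum]
    simp [add_comm]
  have sumB : ∀ i : Fin d, ∑ k, ((1:ℂ) - (aCoef d i k : ℂ)) * W k
      = (1 - b) * ((∑ k, W k) - W i) := by
    intro i
    have h : ∀ k : Fin d, ((1:ℂ) - (aCoef d i k : ℂ)) * W k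
        = (1 - b) * W k - (if i = k then (1 - b) * W k else 0) := by
      intro k; rw [hcoef]; split_ifs <;> ring
    rw [Finset.sum_congr rfl fun k _ => h k, Finset.sum_sub_distrib, Finset.sum_ite_eq,
      ← Finset.mul_sum]
    simp [mul_sub]
  have key : ∀ i p q : Fin d, (Amat d *ᵥ v) (i,(p,q)) =
      (1 - b) * v (i,(p,q)) + b * (∑ k, v (k,(p,q))) +
        (if p = q then (d:ℂ)⁻¹ * ((1 - b) * ((∑ k, W k) - W i)) else 0) := by
    intro i p q
    rw [amat_mulVec, sumA]
    congr 1
    by_cases hpq : p = q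
    · simp only [hpq, if_true, eq_self_iff_true]
      rw [← sumB i]
    · simp [hpq]
  constructor
  · intro h
    have hz : ∀ i p q : Fin d,
        (1 - b) * v (i,(p,q)) + b * (∑ k, v (k,(p,q))) +
          (if p = q then (d:ℂ)⁻¹ * ((1 - b) * ((∑ k, W k) - W i)) else 0) = 0 := by
      intro i p q
      rw [← key]
      exact congrFun h (i,(p,q))
    have hToff : ∀ p q : Fin d, p ≠ q → (∑ k, v (k,(p,q))) = 0 := by
      intro p q hpq
      have h0 : ∑ i : Fin d, ((1 - b) * v (i,(p,q)) + b * ∑ k, v (k,(p,q))) = 0 := by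
        apply Finset.sum_eq_zero
        intro i _
        simpa [hpq] using hz i p q
      rw [Finset.sum_add_distrib, ← Finset.mul_sum, Finset.sum_const, Finset.card_univ,
        Fintype.card_fin, nsmul_eq_mul] at h0
      have h1 : ((1:ℂ) + ((d:ℂ) - 1) * b) * (∑ k, v (k,(p,q))) = 0 := by
        linear_combination h0
      rcases mul_eq_zero.mp h1 with h2 | h2
      · exact absurd h2 hkey2
      · exact h2
    have hvoff : ∀ i p q : Fin d, p ≠ q → v (i,(p,q)) = 0 := by
      intro i p q hpq
      have h5 := hz i p q
      rw [hToff p q hpq] at h5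
      simp only [hpq, if_false, mul_zero, add_zero] at h5
      rcases mul_eq_zero.mp h5 with h2 | h2
      · exact absurd h2 h1b
      · exact h2
    -- S = 0
    have i0 : Fin d := ⟨0, by omega⟩
    have hS0 : (∑ k, W k) = 0 := by
      have h2 : ∑ p : Fin d, ((1 - b) * v (i0,(p,p)) + b * (∑ k, v (k,(p,p))) +
          (d:ℂ)⁻¹ * ((1 - b) * ((∑ k, W k) - W i0))) = 0 := by
        apply Finset.sum_eq_zero
        intro p _
        simpa using hz i0 p p
      rw [Finset.sum_add_distrib, Finset.sum_add_distrib] at h2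
      have e1 : ∑ p : Fin d, (1 - b) * v (i0,(p,p)) = (1 - b) * W i0 := by
        rw [← Finset.mul_sum]
      have e2 : ∑ p : Fin d, b * (∑ k, v (k,(p,p))) = b * ∑ k, W k := by
        rw [← Finset.mul_sum, Finset.sum_comm]
      have e3 : ∑ _p : Fin d, (d:ℂ)⁻¹ * ((1 - b) * ((∑ k, W k) - W i0))
          = (d:ℂ) * ((d:ℂ)⁻¹ * ((1 - b) * ((∑ k, W k) - W i0))) := by
        rw [Finset.sum_const, Finset.card_univ, Fintype.card_fin, nsmul_eq_mul]
      rw [e1, e2, e3] at h2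
      linear_combination h2 + ((1 - b) * (W i0 - ∑ k, W k)) * hc
    have hTdiag : ∀ p : Fin d, (∑ k, v (k,(p,p))) = 0 := by
      intro p
      have h3 : ∑ i : Fin d, ((1 - b) * v (i,(p,p)) + b * (∑ k, v (k,(p,p))) +
          (d:ℂ)⁻¹ * ((1 - b) * ((∑ k, W k) - W i))) = 0 := by
        apply Finset.sum_eq_zero
        intro i _
        simpa using hz i p p
      rw [Finset.sum_add_distrib, Finset.sum_add_distrib] at h3
      have e1 : ∑ i : Fin d, (1 - b) * v (i,(p,p)) = (1 - b) * ∑ k, v (k,(p,p)) := by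
        rw [← Finset.mul_sum]
      have e2 : ∑ _i : Fin d, b * (∑ k, v (k,(p,p))) = (d:ℂ) * (b * ∑ k, v (k,(p,p))) := by
        rw [Finset.sum_const, Finset.card_univ, Fintype.card_fin, nsmul_eq_mul]
      have e3 : ∑ i : Fin d, (d:ℂ)⁻¹ * ((1 - b) * ((∑ k, W k) - W i))
          = (d:ℂ)⁻¹ * ((1 - b) * ((d:ℂ) * (∑ k, W k) - ∑ k, W k)) := by
        rw [← Finset.mul_sum, ← Finset.mul_sum, Finset.sum_sub_distrib, Finset.sum_const,
          Finset.card_univ, Fintype.card_fin, nsmul_eq_mul]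
      rw [e1, e2, e3, hS0] at h3
      simp only [mul_zero, zero_sub, sub_zero, neg_zero, add_zero] at h3
      have h4 : ((1:ℂ) + ((d:ℂ) - 1) * b) * (∑ k, v (k,(p,p))) = 0 := by
        linear_combination h3
      rcases mul_eq_zero.mp h4 with h5 | h5
      · exact absurd h5 hkey2
      · exact h5
    have hvdiag : ∀ i p : Fin d, v (i,(p,p)) = (d:ℂ)⁻¹ * W i := by
      intro i p
      have h5 := hz i p p
      rw [hTdiag p, hS0] at h5
      simp only [eq_self_iff_true, if_true, mul_zero, add_zero, zero_sub] at h5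
      have h6 : (1 - b) * (v (i,(p,p)) - (d:ℂ)⁻¹ * W i) = 0 := by
        linear_combination h5
      rcases mul_eq_zero.mp h6 with h7 | h7
      · exact absurd h7 h1b
      · linear_combination h7
    refine ⟨fun i => ((Real.sqrt d : ℝ) : ℂ)⁻¹ * W i, ?_, ?_⟩
    · rw [← Finset.mul_sum, hS0, mul_zero]
    · intro i p q
      by_cases hpq : p = q
      · subst hpq
        rw [hvdiag i p]
        simp only [if_pos rfl, eq_self_iff_true, if_true]
        rw [← hinv2]; ring
      · rw [hvoff i p q hpq]
        simp [hpq]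
  · rintro ⟨μ, hsum, hmu⟩
    funext x
    obtain ⟨i, p, q⟩ := x
    rw [show (0 : Fin d × (Fin d × Fin d) → ℂ) (i,(p,q)) = 0 from rfl, key i p q]
    have hT : ∑ k, v (k,(p,q)) = 0 := by
      rw [Finset.sum_congr rfl fun k _ => hmu k p q, ← Finset.sum_mul, hsum, zero_mul]
    have hwk : ∀ k : Fin d, W k = (d:ℂ) * (μ k * ((Real.sqrt d : ℝ) : ℂ)⁻¹) := by
      intro k
      simp only [hW]
      rw [Finset.sum_congr rfl fun r _ => hmu k r r]
      simp [Finset.sum_const, Finset.card_univ, nsmul_eq_mul]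
    have hSz : (∑ k, W k) = 0 := by
      rw [Finset.sum_congr rfl fun k _ => hwk k, ← Finset.mul_sum, ← Finset.sum_mul, hsum,
        zero_mul, mul_zero]
    rw [hT, hmu i p q, hSz, hwk i]
    by_cases hpq : p = q
    · simp only [hpq, if_pos rfl, eq_self_iff_true, if_true]
      linear_combination (-(1 - b) * μ i * ((Real.sqrt d : ℝ) : ℂ)⁻¹) * hc
    · simp [hpq]
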